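/- Let 1 < p < 2 and let a, b, c, d be real numbers. Then (J_p(a-b) - J_p(c-d))·((a-c) - (b-d)) ≥ (p-1)·|(a-c) - (b-d)|²·(|a-b|² + |c-d|²)^{(p-2)/2}, where the right-hand side is interpreted as 0 when a = b and c = d. -/

import Mathlib

noncomputable def J (p t : ℝ) : ℝ := |t| ^ (p - 2) * t

lemma J_neg (p t : ℝ) : J p (-t) = - J p t := by
  simp [J, abs_neg, mul_comm]

/-- For positive base below `√(x²+y²)`, negative power comparison. -/
lemma pow_ge_aux (p : ℝ) (hp2 : p < 2) {x : ℝ} (hx : 0 < x) (y : ℝ) :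
    (x ^ 2 + y ^ 2) ^ ((p - 2) / 2) ≤ x ^ (p - 2) := by
  have h1 : x ^ (p - 2) = (x ^ 2) ^ ((p - 2) / 2) := by
    rw [← Real.rpow_natCast x 2, ← Real.rpow_mul hx.le]
    congr 1
    ring
  rw [h1]
  exact Real.rpow_le_rpow_of_nonpos (by positivity) (by nlinarith [sq_nonneg y])
    (by linarith)

/-- Core: concavity-type bound for `0 ≤ y < x`. -/
lemma core1 (p : ℝ) (hp1 : 1 < p) (hp2 : p < 2) {x y : ℝ} (hy : 0 ≤ y) (hxy : y < x) :
    (p - 1) * (x - y) * x ^ (p - 2) ≤ J p x - J p y := by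
  have hx : 0 < x := lt_of_le_of_lt hy hxy
  have hJx : J p x = x ^ (p - 1) := by
    rw [J, abs_of_pos hx, show p - 1 = p - 2 + 1 by ring, Real.rpow_add hx, Real.rpow_one]
  have hxp2 : x ^ (p - 2) = x ^ (p - 1) / x := by
    rw [eq_div_iff hx.ne', show p - 1 = p - 2 + 1 by ring, Real.rpow_add hx, Real.rpow_one]
  rcases eq_or_lt_of_le hy with h0 | h0
  · -- y = 0
    have hJy : J p y = 0 := by
      rw [J, ← h0, abs_zero, Real.zero_rpow (by linarith), zero_mul]
    rw [hJy, hJx, ← h0, sub_zero, sub_zero, hxp2]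
    rw [div_eq_mul_inv]
    have hxp1 : 0 < x ^ (p - 1) := Real.rpow_pos_of_pos hx _
    have : (p - 1) * x * (x ^ (p - 1) * x⁻¹) = (p - 1) * x ^ (p - 1) := by
      field_simp
    rw [this]
    nlinarith
  · -- 0 < y
    have hJy : J p y = y ^ (p - 1) := by
      rw [J, abs_of_pos h0, show p - 1 = p - 2 + 1 by ring, Real.rpow_add h0, Real.rpow_one]
    rw [hJx, hJy]
    -- Bernoulli: (y/x)^(p-1) = (1 + (y/x - 1))^(p-1) ≤ 1 + (p-1)(y/x - 1)
    have hs : -1 ≤ y / x - 1 := by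
      have : 0 ≤ y / x := div_nonneg hy hx.le
      linarith
    have hb := rpow_one_add_le_one_add_mul_self hs (by linarith : (0:ℝ) ≤ p - 1)
      (by linarith : p - 1 ≤ 1)
    rw [show 1 + (y / x - 1) = y / x by ring] at hb
    have hdiv : (y / x) ^ (p - 1) = y ^ (p - 1) / x ^ (p - 1) :=
      Real.div_rpow hy hx.le _
    rw [hdiv] at hb
    have hxp1 : 0 < x ^ (p - 1) := Real.rpow_pos_of_pos hx _
    have hb' : y ^ (p - 1) ≤ (1 + (p - 1) * (y / x - 1)) * x ^ (p - 1) := by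
      rw [div_le_iff₀ hxp1] at hb; linarith
    have key : (1 + (p - 1) * (y / x - 1)) * x ^ (p - 1)
        = x ^ (p - 1) - (p - 1) * (x - y) * (x ^ (p - 1) / x) := by
      field_simp; ring
    rw [key, ← hxp2] at hb'
    linarith

/-- Main one-variable inequality, for `y ≤ x`. -/
lemma main_le (p : ℝ) (hp1 : 1 < p) (hp2 : p < 2) {x y : ℝ} (hxy : y ≤ x) :
    (p - 1) * (x - y) ^ 2 * ((x ^ 2 + y ^ 2) ^ ((p - 2) / 2)) ≤
      (J p x - J p y) * (x - y) := by
  rcases eq_or_lt_of_le hxy with h | h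
  · subst h; simp
  have hxy0 : 0 < x - y := by linarith
  have hp1' : (0:ℝ) < p - 1 := by linarith
  -- reduce to: (p-1)*(x-y)*(x²+y²)^((p-2)/2) ≤ J p x - J p y
  suffices hS : (p - 1) * (x - y) * ((x ^ 2 + y ^ 2) ^ ((p - 2) / 2)) ≤ J p x - J p y by
    calc (p - 1) * (x - y) ^ 2 * ((x ^ 2 + y ^ 2) ^ ((p - 2) / 2))
        = ((p - 1) * (x - y) * ((x ^ 2 + y ^ 2) ^ ((p - 2) / 2))) * (x - y) := by ring
      _ ≤ (J p x - J p y) * (x - y) := by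
          exact mul_le_mul_of_nonneg_right hS hxy0.le
  rcases le_or_gt 0 y with hy | hy
  · -- 0 ≤ y < x
    have hx : 0 < x := lt_of_le_of_lt hy h
    have h1 := core1 p hp1 hp2 hy h
    have h2 := pow_ge_aux p hp2 hx y
    have h3 : (p - 1) * (x - y) * ((x ^ 2 + y ^ 2) ^ ((p - 2) / 2)) ≤
        (p - 1) * (x - y) * x ^ (p - 2) :=
      mul_le_mul_of_nonneg_left h2 (by nlinarith)
    linarith
  rcases le_or_gt x 0 with hx | hx
  · -- y < x ≤ 0 : negate
    have h1 := core1 p hp1 hp2 (by linarith : (0:ℝ) ≤ -x) (by linarith : -x < -y)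
    have h2 := pow_ge_aux p hp2 (by linarith : (0:ℝ) < -y) x
    rw [J_neg, J_neg, show -y - -x = x - y by ring] at h1
    have e : (-y) ^ 2 + x ^ 2 = x ^ 2 + y ^ 2 := by ring
    rw [e] at h2
    have h3 : (p - 1) * (x - y) * ((x ^ 2 + y ^ 2) ^ ((p - 2) / 2)) ≤
        (p - 1) * (x - y) * (-y) ^ (p - 2) :=
      mul_le_mul_of_nonneg_left h2 (by nlinarith)
    linarith
  · -- y < 0 < x
    have hJx : J p x = x * x ^ (p - 2) := by
      rw [J, abs_of_pos hx]; ring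
    have hJy : J p y = y * (-y) ^ (p - 2) := by
      rw [J, abs_of_neg hy]; ring
    have h2 := pow_ge_aux p hp2 hx y
    have h3 := pow_ge_aux p hp2 (by linarith : (0:ℝ) < -y) x
    have e : (-y) ^ 2 + x ^ 2 = x ^ 2 + y ^ 2 := by ring
    rw [e] at h3
    have hA : 0 ≤ (x ^ 2 + y ^ 2) ^ ((p - 2) / 2) := Real.rpow_nonneg (by positivity) _
    -- x * x^(p-2) ≥ (p-1) * x * A  and  -y * (-y)^(p-2) ≥ (p-1) * (-y) * A
    have hx1 : (p - 1) * x * ((x ^ 2 + y ^ 2) ^ ((p - 2) / 2)) ≤ x * x ^ (p - 2) := by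
      have e1 : (p - 1) * x * ((x ^ 2 + y ^ 2) ^ ((p - 2) / 2)) ≤
          x * ((x ^ 2 + y ^ 2) ^ ((p - 2) / 2)) := by
        nlinarith [mul_nonneg hx.le hA]
      have e2 : x * ((x ^ 2 + y ^ 2) ^ ((p - 2) / 2)) ≤ x * x ^ (p - 2) :=
        mul_le_mul_of_nonneg_left h2 hx.le
      linarith
    have hy1 : (p - 1) * (-y) * ((x ^ 2 + y ^ 2) ^ ((p - 2) / 2)) ≤ (-y) * (-y) ^ (p - 2) := by
      have e1 : (p - 1) * (-y) * ((x ^ 2 + y ^ 2) ^ ((p - 2) / 2)) ≤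
          (-y) * ((x ^ 2 + y ^ 2) ^ ((p - 2) / 2)) := by
        nlinarith [mul_nonneg (by linarith : (0:ℝ) ≤ -y) hA]
      have e2 : (-y) * ((x ^ 2 + y ^ 2) ^ ((p - 2) / 2)) ≤ (-y) * (-y) ^ (p - 2) :=
        mul_le_mul_of_nonneg_left h3 (by linarith)
      linarith
    rw [hJx, hJy]
    nlinarith [hx1, hy1]

theorem stmt_16 (p : ℝ) (hp1 : 1 < p) (hp2 : p < 2) (a b c d : ℝ) :
    (J p (a - b) - J p (c - d)) * ((a - c) - (b - d)) ≥
      (p - 1) * |(a - c) - (b - d)| ^ 2 *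
        ((|a - b| ^ 2 + |c - d| ^ 2) ^ ((p - 2) / 2)) := by
  set x := a - b with hx
  set y := c - d with hy
  have e1 : (a - c) - (b - d) = x - y := by ring
  rw [e1, sq_abs, sq_abs, sq_abs]
  rcases le_or_gt y x with h | h
  · exact main_le p hp1 hp2 h
  · have := main_le p hp1 hp2 h.le
    have e2 : y ^ 2 + x ^ 2 = x ^ 2 + y ^ 2 := by ring
    rw [e2] at this
    calc (p - 1) * (x - y) ^ 2 * ((x ^ 2 + y ^ 2) ^ ((p - 2) / 2))
        = (p - 1) * (y - x) ^ 2 * ((x ^ 2 + y ^ 2) ^ ((p - 2) / 2)) := by ring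
      _ ≤ (J p y - J p x) * (y - x) := this
      _ = (J p x - J p y) * (x - y) := by ring
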